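/- arXiv:2207.05448 — 15 statements merged into one kernel-verified Lean document; each statement's English description precedes it below -/
import Mathlib

section
/- Let S be a semiring. Then the relation δ is a congruence of S. -/
universe u

/-- A semiring in the sense of the paper: a (nonempty) set with an associative
commutative addition and an associative multiplication distributing over
addition from both sides.  No additive or multiplicative identity is assumed. -/
class PaperSemiring (S : Type*) extends Add S, Mul S where
  add_assoc : ∀ a b c : S, a + b + c = a + (b + c)
  add_comm : ∀ a b : S, a + b = b + a
  mul_assoc : ∀ a b c : S, a * b * c = a * (b * c)
  left_distrib : ∀ a b c : S, a * (b + c) = a * b + a * c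
  right_distrib : ∀ a b c : S, (a + b) * c = a * c + b * c

/-- `nfoldAdd n x` is the `n`-fold sum `x + ⋯ + x` (only meaningful for `n ≥ 1`;
we set `nfoldAdd 0 x = x` as a junk value). -/
def nfoldAdd {S : Type*} [Add S] : ℕ → S → S
  | 0, x => x
  | 1, x => x
  | n + 2, x => nfoldAdd (n + 1) x + x

/-- `nfoldMul n x` is the `n`-fold product `x * ⋯ * x` (only meaningful for `n ≥ 1`;
we set `nfoldMul 0 x = x` as a junk value). -/
def nfoldMul {S : Type*} [Mul S] : ℕ → S → S
  | 0, x => x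
  | 1, x => x
  | n + 2, x => nfoldMul (n + 1) x * x

/-- `w` is multiplicatively absorbing. -/
def MulAbsorbing {S : Type*} [Mul S] (w : S) : Prop :=
  ∀ x : S, x * w = w ∧ w * x = w

/-- `w` is a zero element: multiplicatively absorbing and additively neutral. -/
def IsZeroElem {S : Type*} [Add S] [Mul S] (w : S) : Prop :=
  MulAbsorbing w ∧ ∀ x : S, x + w = x

/-- `w` is bi-absorbing: multiplicatively and additively absorbing. -/
def BiAbsorbing {S : Type*} [Add S] [Mul S] (w : S) : Prop :=
  MulAbsorbing w ∧ ∀ x : S, x + w = w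

/-- `I` is an ideal: nonempty, `I+I ⊆ I`, `S·I ⊆ I`, `I·S ⊆ I`. -/
def IsIdealSet {S : Type*} [Add S] [Mul S] (I : Set S) : Prop :=
  I.Nonempty ∧ (∀ a ∈ I, ∀ b ∈ I, a + b ∈ I) ∧
    ∀ s : S, ∀ a ∈ I, s * a ∈ I ∧ a * s ∈ I

/-- `I` is a bi-ideal: nonempty, `S+I ⊆ I`, `S·I ⊆ I`, `I·S ⊆ I`. -/
def IsBiIdealSet {S : Type*} [Add S] [Mul S] (I : Set S) : Prop :=
  I.Nonempty ∧ (∀ s : S, ∀ a ∈ I, s + a ∈ I) ∧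
    ∀ s : S, ∀ a ∈ I, s * a ∈ I ∧ a * s ∈ I

/-- The relation `α_I`:  `(x,y) ∈ α_I` iff `x + a = y + b` for some `a, b ∈ I`. -/
def alphaRel {S : Type*} [Add S] (I : Set S) (x y : S) : Prop :=
  ∃ a ∈ I, ∃ b ∈ I, x + a = y + b

/-- The relation `β_J = (J×J) ∪ id`. -/
def betaRel {S : Type*} (J : Set S) (x y : S) : Prop :=
  (x ∈ J ∧ y ∈ J) ∨ x = y

/-- The relation `γ_n`: `(x,y) ∈ γ_n` iff `n·x = n·y`. -/
def gammaRel {S : Type*} [Add S] (n : ℕ) (x y : S) : Prop :=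
  nfoldAdd n x = nfoldAdd n y

/-- The relation `δ`: `(x,y) ∈ δ` iff `2^i·x = y + u` and `2^i·y = x + v` for
some `i ≥ 0` and `u, v ∈ S`. -/
def deltaRel {S : Type*} [Add S] (x y : S) : Prop :=
  ∃ (i : ℕ) (u v : S), nfoldAdd (2 ^ i) x = y + u ∧ nfoldAdd (2 ^ i) y = x + v

/-- A congruence: an equivalence relation compatible with both operations. -/
def IsCongruence {S : Type*} [Add S] [Mul S] (r : S → S → Prop) : Prop :=
  Equivalence r ∧ (∀ x x' y y' : S, r x x' → r y y' → r (x + y) (x' + y')) ∧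
    ∀ x x' y y' : S, r x x' → r y y' → r (x * y) (x' * y')

/-- `S` is congruence-simple: it has just two congruences (the identity relation
and the full relation, which are distinct). -/
def CongSimple (S : Type*) [Add S] [Mul S] : Prop :=
  (∃ x y : S, x ≠ y) ∧
    ∀ r : S → S → Prop, IsCongruence r → (∀ x y, r x y ↔ x = y) ∨ ∀ x y, r x y

/-- The two-element semiring `𝕋₄`. -/
inductive T4 : Type where | a | b

instance : Add T4 := ⟨fun x y => match x, y with | .a, .a => .a | _, _ => .b⟩
instance : Mul T4 := ⟨fun x y => match x, y with | .b, .b => .b | _, _ => .a⟩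

/-- The two-element semiring `𝕋₈`. -/
inductive T8 : Type where | a | b

instance : Add T8 := ⟨fun _ _ => .a⟩
instance : Mul T8 := ⟨fun x y => match x, y with | .b, .b => .b | _, _ => .a⟩

/-- Isomorphism of semirings (as sets with two binary operations). -/
def SIso (S T : Type*) [Add S] [Mul S] [Add T] [Mul T] : Prop :=
  ∃ f : S ≃ T, (∀ x y : S, f (x + y) = f x + f y) ∧ ∀ x y : S, f (x * y) = f x * f y

/-- Addition of the semiring `V(G)` on `Option G` (`none` plays the role of `o`):
`x + x = x` and `x + y = o` for `x ≠ y`. -/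
noncomputable def vAdd {G : Type*} (x y : Option G) : Option G :=
  haveI := Classical.decEq (Option G)
  if x = y then x else none

/-- Multiplication of the semiring `V(G)` on `Option G`: it extends the one of `G`,
and `o` is multiplicatively absorbing. -/
def vMul {G : Type*} [Mul G] : Option G → Option G → Option G
  | some x, some y => some (x * y)
  | _, _ => none


section Aux
variable {S : Type*} [PaperSemiring S]

instance : AddCommSemigroup S where
  add_assoc := PaperSemiring.add_assoc
  add_comm := PaperSemiring.add_comm

lemma nf_succ {n : ℕ} (hn : n ≠ 0) (x : S) :
    nfoldAdd (n + 1) x = nfoldAdd n x + x := by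
  cases n with
  | zero => exact absurd rfl hn
  | succ m => rfl

lemma nf_split {m n : ℕ} (hm : m ≠ 0) (hn : n ≠ 0) (x : S) :
    nfoldAdd (m + n) x = nfoldAdd m x + nfoldAdd n x := by
  induction n with
  | zero => exact absurd rfl hn
  | succ k ih =>
    cases k with
    | zero => exact nf_succ hm x
    | succ l =>
      rw [show m + (l + 1 + 1) = (m + (l + 1)) + 1 by omega,
        nf_succ (n := m + (l + 1)) (by omega) x, ih (by omega),
        nf_succ (n := l + 1) (by omega) x, add_assoc]

lemma nf_add_distrib {n : ℕ} (hn : n ≠ 0) (x y : S) :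
    nfoldAdd n (x + y) = nfoldAdd n x + nfoldAdd n y := by
  induction n with
  | zero => exact absurd rfl hn
  | succ k ih =>
    cases k with
    | zero => rfl
    | succ l =>
      rw [nf_succ (n := l + 1) (by omega) (x + y),
        nf_succ (n := l + 1) (by omega) x,
        nf_succ (n := l + 1) (by omega) y, ih (by omega)]
      simp only [add_assoc, add_comm, add_left_comm]

lemma nf_mul_right {n : ℕ} (x y : S) :
    nfoldAdd n x * y = nfoldAdd n (x * y) := by
  induction n with
  | zero => rfl
  | succ k ih =>
    cases k with
    | zero => rfl
    | succ l =>
      rw [nf_succ (n := l + 1) (by omega) x,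
        nf_succ (n := l + 1) (by omega) (x * y),
        PaperSemiring.right_distrib, ih]

lemma nf_mul_left {n : ℕ} (x y : S) :
    x * nfoldAdd n y = nfoldAdd n (x * y) := by
  induction n with
  | zero => rfl
  | succ k ih =>
    cases k with
    | zero => rfl
    | succ l =>
      rw [nf_succ (n := l + 1) (by omega) y,
        nf_succ (n := l + 1) (by omega) (x * y),
        PaperSemiring.left_distrib, ih]

lemma nf_nf {m n : ℕ} (hm : m ≠ 0) (hn : n ≠ 0) (x : S) :
    nfoldAdd m (nfoldAdd n x) = nfoldAdd (m * n) x := by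
  induction m with
  | zero => exact absurd rfl hm
  | succ k ih =>
    cases k with
    | zero =>
      show nfoldAdd 1 (nfoldAdd n x) = _
      simp only [Nat.zero_add, Nat.one_mul]
      rfl
    | succ l =>
      rw [nf_succ (n := l + 1) (by omega) (nfoldAdd n x), ih (by omega),
        show (l + 1 + 1) * n = (l + 1) * n + n by ring,
        nf_split (by positivity) hn]

lemma half_bump {i : ℕ} {x y u : S} (h : nfoldAdd (2 ^ i) x = y + u) :
    ∃ u', nfoldAdd (2 ^ (i + 1)) x = y + u' := by
  refine ⟨u + (y + u), ?_⟩
  have h2 : (2 : ℕ) ^ (i + 1) = 2 ^ i + 2 ^ i := by ring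
  rw [h2, nf_split (by positivity) (by positivity), h, add_assoc]

lemma bump_le {i j : ℕ} (hij : i ≤ j) {x y u : S}
    (h : nfoldAdd (2 ^ i) x = y + u) :
    ∃ u', nfoldAdd (2 ^ j) x = y + u' := by
  induction j with
  | zero =>
    rw [show i = 0 by omega] at h
    exact ⟨u, h⟩
  | succ k ih =>
    rcases Nat.lt_or_ge i (k + 1) with hlt | hge
    · obtain ⟨u', hu'⟩ := ih (by omega)
      exact half_bump hu'
    · rw [show i = k + 1 by omega] at h
      exact ⟨u, h⟩

end Aux

/-- Let `S` be a semiring.  Then the relation `δ` is a congruence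
of `S`. -/
theorem stmt_2 {S : Type*} [PaperSemiring S] [Nonempty S] :
    IsCongruence (deltaRel (S := S)) := by
  refine ⟨⟨?_, ?_, ?_⟩, ?_, ?_⟩
  · -- reflexivity
    intro x
    exact ⟨1, x, x, rfl, rfl⟩
  · -- symmetry
    rintro x y ⟨i, u, v, h1, h2⟩
    exact ⟨i, v, u, h2, h1⟩
  · -- transitivity
    rintro x y z ⟨i, u, v, h1, h2⟩ ⟨j, u', v', h3, h4⟩
    refine ⟨i + j, u' + nfoldAdd (2 ^ j) u, v + nfoldAdd (2 ^ i) v', ?_, ?_⟩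
    · rw [show (2:ℕ) ^ (i + j) = 2 ^ j * 2 ^ i by ring,
        ← nf_nf (by positivity) (by positivity), h1,
        nf_add_distrib (by positivity), h3, add_assoc]
    · rw [show (2:ℕ) ^ (i + j) = 2 ^ i * 2 ^ j by ring,
        ← nf_nf (by positivity) (by positivity), h4,
        nf_add_distrib (by positivity), h2, add_assoc]
  · -- addition
    rintro x x' y y' ⟨i, u, v, h1, h2⟩ ⟨j, w, t, h3, h4⟩
    obtain ⟨u1, hu1⟩ := bump_le (Nat.le_max_left i j) h1
    obtain ⟨u2, hu2⟩ := bump_le (Nat.le_max_left i j) h2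
    obtain ⟨u3, hu3⟩ := bump_le (Nat.le_max_right i j) h3
    obtain ⟨u4, hu4⟩ := bump_le (Nat.le_max_right i j) h4
    set k := max i j
    refine ⟨k, u1 + u3, u2 + u4, ?_, ?_⟩
    · rw [nf_add_distrib (by positivity), hu1, hu3]
      simp only [add_assoc, add_comm, add_left_comm]
    · rw [nf_add_distrib (by positivity), hu2, hu4]
      simp only [add_assoc, add_comm, add_left_comm]
  · -- multiplication
    rintro x x' y y' ⟨i, u, v, h1, h2⟩ ⟨j, w, t, h3, h4⟩
    obtain ⟨u1, hu1⟩ := bump_le (Nat.le_max_left i j) h1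
    obtain ⟨u2, hu2⟩ := bump_le (Nat.le_max_left i j) h2
    obtain ⟨u3, hu3⟩ := bump_le (Nat.le_max_right i j) h3
    obtain ⟨u4, hu4⟩ := bump_le (Nat.le_max_right i j) h4
    set k := max i j
    refine ⟨k + k, u1 * y' + nfoldAdd (2 ^ k) (x * u3),
      u2 * y + nfoldAdd (2 ^ k) (x' * u4), ?_, ?_⟩
    · rw [show (2:ℕ) ^ (k + k) = 2 ^ k * 2 ^ k by ring,
        ← nf_nf (by positivity) (by positivity),
        ← nf_mul_left, hu3, PaperSemiring.left_distrib,
        nf_add_distrib (by positivity), ← nf_mul_right, hu1,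
        PaperSemiring.right_distrib, add_assoc]
    · rw [show (2:ℕ) ^ (k + k) = 2 ^ k * 2 ^ k by ring,
        ← nf_nf (by positivity) (by positivity),
        ← nf_mul_left, hu4, PaperSemiring.left_distrib,
        nf_add_distrib (by positivity), ← nf_mul_right, hu2,
        PaperSemiring.right_distrib, add_assoc]
end

section
/- Let S be a semiring and I a bi-ideal of S. Then β_I ⊆ α_I, and β_I = α_I if and only if I = S. -/
universe u

/-- Let `S` be a semiring and `I` a bi-ideal of `S`.  Then
`β_I ⊆ α_I`, and `β_I = α_I` if and only if `I = S`. -/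
theorem stmt_4 {S : Type*} [PaperSemiring S] (I : Set S) (hI : IsBiIdealSet I) :
    (∀ x y : S, betaRel I x y → alphaRel I x y) ∧
      ((∀ x y : S, betaRel I x y ↔ alphaRel I x y) ↔ I = Set.univ) := by
  obtain ⟨⟨i, hi⟩, hadd, hmul⟩ := hI
  have halpha : ∀ x y : S, alphaRel I x y := by
    intro x y
    refine ⟨y + i, hadd y i hi, x + i, hadd x i hi, ?_⟩
    rw [← PaperSemiring.add_assoc, ← PaperSemiring.add_assoc,
      PaperSemiring.add_comm x y]
  refine ⟨fun x y _ => halpha x y, ?_⟩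
  constructor
  · intro h
    ext x
    simp only [Set.mem_univ, iff_true]
    have := (h x i).mpr (halpha x i)
    rcases this with ⟨hx, _⟩ | rfl
    · exact hx
    · exact hi
  · intro h x y
    subst h
    exact ⟨fun _ => halpha x y, fun _ => Or.inl ⟨trivial, trivial⟩⟩
end

section
/- Let S be a semiring. If γ_2 = id_S and δ = S×S, then S is additively cancellative, i.e., x + z = y + z implies x = y for all x, y, z ∈ S. -/
universe u

section AuxStmt5

variable {S : Type u} [PaperSemiring S]

instance (priority := 100) paperACS : AddCommSemigroup S where
  add_assoc := PaperSemiring.add_assoc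
  add_comm := PaperSemiring.add_comm

theorem nfold_succ (x : S) : ∀ n, 1 ≤ n → nfoldAdd (n + 1) x = nfoldAdd n x + x
  | _ + 1, _ => rfl

theorem nfold_split (x : S) : ∀ n, 1 ≤ n → ∀ m, 1 ≤ m →
    nfoldAdd (m + n) x = nfoldAdd m x + nfoldAdd n x := by
  intro n
  induction n with
  | zero => omega
  | succ n ih =>
    intro _ m hm
    rcases Nat.eq_zero_or_pos n with h | h
    · subst h
      simpa [nfoldAdd] using nfold_succ x m hm
    · have e : m + (n + 1) = (m + n) + 1 := by omega
      rw [e, nfold_succ x (m + n) (by omega), ih h m hm, nfold_succ x n h, add_assoc]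

theorem pow2_cancel (h2 : ∀ x y : S, gammaRel 2 x y ↔ x = y) :
    ∀ l (x y : S), nfoldAdd (2 ^ l) x = nfoldAdd (2 ^ l) y → x = y := by
  intro l
  induction l with
  | zero => intro x y h; simpa [nfoldAdd] using h
  | succ l ih =>
    intro x y h
    apply ih
    apply (h2 _ _).mp
    have e : (2 : ℕ) ^ (l + 1) = 2 ^ l + 2 ^ l := by rw [pow_succ]; omega
    rw [e, nfold_split x (2 ^ l) Nat.one_le_two_pow (2 ^ l) Nat.one_le_two_pow,
      nfold_split y (2 ^ l) Nat.one_le_two_pow (2 ^ l) Nat.one_le_two_pow] at h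
    show nfoldAdd 2 (nfoldAdd (2 ^ l) x) = nfoldAdd 2 (nfoldAdd (2 ^ l) y)
    exact h

end AuxStmt5

/-- Let `S` be a semiring.  If `γ_2 = id_S` and `δ = S×S`, then
`S` is additively cancellative. -/
theorem stmt_5 {S : Type*} [PaperSemiring S]
    (h2 : ∀ x y : S, gammaRel 2 x y ↔ x = y) (hd : ∀ x y : S, deltaRel x y) :
    ∀ x y z : S, x + z = y + z → x = y := by
  intro x y z hxz
  obtain ⟨i, u, v, hu, -⟩ := hd x z
  obtain ⟨j, u', v', hu', -⟩ := hd y z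
  set k : ℕ := 2 ^ i with hkdef
  set m : ℕ := 2 ^ j with hmdef
  have hk : 1 ≤ k := Nat.one_le_two_pow
  have hm : 1 ≤ m := Nat.one_le_two_pow
  -- Family A : n·x + z = n·y + z for all n ≥ 1
  have hA : ∀ n, 1 ≤ n → nfoldAdd n x + z = nfoldAdd n y + z := by
    intro n hn
    induction n with
    | zero => omega
    | succ n ih =>
      rcases Nat.eq_zero_or_pos n with h | h
      · subst h; simpa [nfoldAdd] using hxz
      · have ihA := ih h
        calc nfoldAdd (n + 1) x + z = nfoldAdd n x + x + z := by rw [nfold_succ x n h]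
          _ = (nfoldAdd n x + z) + x := by
              rw [add_assoc, add_assoc, add_comm x z]
          _ = (nfoldAdd n y + z) + x := by rw [ihA]
          _ = nfoldAdd n y + (x + z) := by rw [add_assoc, add_comm z x]
          _ = nfoldAdd n y + (y + z) := by rw [hxz]
          _ = nfoldAdd (n + 1) y + z := by rw [nfold_succ y n h, add_assoc]
  -- "good" coefficients
  have hGx : ∀ t, 1 ≤ t → ∃ w, nfoldAdd (t * k) x = z + w := by
    intro t ht
    induction t with
    | zero => omega
    | succ t ih =>
      rcases Nat.eq_zero_or_pos t with h | h
      · subst h; exact ⟨u, by simpa using hu⟩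
      · obtain ⟨w, hw⟩ := ih h
        refine ⟨w + (z + u), ?_⟩
        have e : (t + 1) * k = t * k + k := by ring
        rw [e, nfold_split x k hk (t * k) (Nat.mul_pos h hk), hw, hu]
        rw [add_assoc]
  have hGy : ∀ t, 1 ≤ t → ∃ w, nfoldAdd (t * m) y = z + w := by
    intro t ht
    induction t with
    | zero => omega
    | succ t ih =>
      rcases Nat.eq_zero_or_pos t with h | h
      · subst h; exact ⟨u', by simpa using hu'⟩
      · obtain ⟨w, hw⟩ := ih h
        refine ⟨w + (z + u'), ?_⟩
        have e : (t + 1) * m = t * m + m := by ring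
        rw [e, nfold_split y m hm (t * m) (Nat.mul_pos h hm), hw, hu']
        rw [add_assoc]
  set c : ℕ := k * m with hcdef
  have hc : 1 ≤ c := Nat.mul_pos hk hm
  obtain ⟨w, hw⟩ : ∃ w, nfoldAdd c x = z + w := by
    have := hGx m hm
    rwa [Nat.mul_comm m k] at this
  obtain ⟨w', hw'⟩ : ∃ w', nfoldAdd c y = z + w' := hGy k hk
  -- the two key steps
  have step1 : nfoldAdd c x + nfoldAdd c x = nfoldAdd c y + nfoldAdd c x := by
    calc nfoldAdd c x + nfoldAdd c x = (nfoldAdd c x + z) + w := by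
          conv_rhs => rw [add_assoc, ← hw]
      _ = (nfoldAdd c y + z) + w := by rw [hA c hc]
      _ = nfoldAdd c y + nfoldAdd c x := by rw [add_assoc, ← hw]
  have step2 : nfoldAdd c x + nfoldAdd c y = nfoldAdd c y + nfoldAdd c y := by
    calc nfoldAdd c x + nfoldAdd c y = (nfoldAdd c x + z) + w' := by
          conv_rhs => rw [add_assoc, ← hw']
      _ = (nfoldAdd c y + z) + w' := by rw [hA c hc]
      _ = nfoldAdd c y + nfoldAdd c y := by rw [add_assoc, ← hw']
  have key : nfoldAdd (c + c) x = nfoldAdd (c + c) y := by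
    rw [nfold_split x c hc c hc, nfold_split y c hc c hc]
    calc nfoldAdd c x + nfoldAdd c x = nfoldAdd c y + nfoldAdd c x := step1
      _ = nfoldAdd c x + nfoldAdd c y := add_comm _ _
      _ = nfoldAdd c y + nfoldAdd c y := step2
  have epow : c + c = 2 ^ (i + j + 1) := by
    rw [hcdef, hkdef, hmdef, pow_succ, pow_add]; ring
  exact pow2_cancel h2 (i + j + 1) x y (by rw [← epow]; exact key)
end

section
/- Let S be a semiring. If γ_2 = S×S and γ_3 = id_S, then S is a ring of characteristic 2; that is, S possesses a zero element 0_S and x + x = 0_S for every x ∈ S (so (S,+) is an abelian group in which every element is its own additive inverse). -/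
universe u

/-- Let `S` be a semiring.  If `γ_2 = S×S` and `γ_3 = id_S`, then
`S` is a ring of characteristic `2`: `S` possesses a zero element `0_S` and
`x + x = 0_S` for every `x ∈ S`. -/
theorem stmt_6 {S : Type*} [PaperSemiring S] [Nonempty S]
    (h2 : ∀ x y : S, gammaRel 2 x y) (h3 : ∀ x y : S, gammaRel 3 x y ↔ x = y) :
    ∃ z : S, IsZeroElem z ∧ ∀ x : S, x + x = z := by
  obtain ⟨x₀⟩ := ‹Nonempty S›
  set z := x₀ + x₀ with hz
  have dbl : ∀ x : S, x + x = z := fun x => by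
    have := h2 x x₀
    simpa [gammaRel, nfoldAdd] using this
  have zz : z + z = z := dbl z
  have neutral : ∀ x : S, x + z = x := by
    intro x
    apply (h3 (x + z) x).mp
    show nfoldAdd 3 (x + z) = nfoldAdd 3 x
    simp only [nfoldAdd]
    rw [dbl (x + z), dbl x, PaperSemiring.add_comm x z,
      ← PaperSemiring.add_assoc, zz]
  refine ⟨z, ⟨fun x => ⟨?_, ?_⟩, neutral⟩, dbl⟩
  · rw [hz, PaperSemiring.left_distrib, dbl]
  · rw [hz, PaperSemiring.right_distrib, dbl]
end

section
/- Let S be a semiring. If γ_2 = S×S and γ_3 = S×S, then S possesses a bi-absorbing element o_S and n·x = o_S for every x ∈ S and every integer n ≥ 2. -/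
universe u

/-- Let `S` be a semiring.  If `γ_2 = S×S` and `γ_3 = S×S`, then
`S` possesses a bi-absorbing element `o_S` and `n·x = o_S` for every `x ∈ S`
and every integer `n ≥ 2`. -/
theorem stmt_7 {S : Type*} [PaperSemiring S] [Nonempty S]
    (h2 : ∀ x y : S, gammaRel 2 x y) (h3 : ∀ x y : S, gammaRel 3 x y) :
    ∃ o : S, BiAbsorbing o ∧ ∀ x : S, ∀ n : ℕ, 2 ≤ n → nfoldAdd n x = o := by
  obtain ⟨x₀⟩ := ‹Nonempty S›
  set o : S := x₀ + x₀ with ho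
  have h2' : ∀ x : S, x + x = o := by
    intro x
    have := h2 x x₀
    simpa [gammaRel, nfoldAdd] using this
  have h3' : ∀ x : S, (x + x) + x = o := by
    intro x
    have := h3 x o
    simp only [gammaRel, nfoldAdd] at this
    rw [this, h2' o]; exact h2' o
  have habs : ∀ x : S, x + o = o := by
    intro x
    have := h3' x
    rw [h2' x, PaperSemiring.add_comm] at this
    exact this
  have hmul : ∀ x : S, x * o = o := by
    intro x
    have : x * o = x * x₀ + x * x₀ := by
      rw [ho, PaperSemiring.left_distrib]
    rw [this, h2']
  have hmul' : ∀ x : S, o * x = o := by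
    intro x
    have : o * x = x₀ * x + x₀ * x := by
      rw [ho, PaperSemiring.right_distrib]
    rw [this, h2']
  refine ⟨o, ⟨fun x => ⟨hmul x, hmul' x⟩, fun x => habs x⟩, ?_⟩
  intro x n hn
  induction n with
  | zero => omega
  | succ m ih =>
    rcases Nat.lt_or_ge m 2 with hm | hm
    · interval_cases m
      · omega
      · exact h2' x
    · have hm1 : nfoldAdd (m + 1) x = nfoldAdd m x + x := by
        obtain ⟨k, rfl⟩ : ∃ k, m = k + 1 := ⟨m - 1, by omega⟩
        rfl
      rw [hm1, ih hm, PaperSemiring.add_comm]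
      exact habs x
end

section
/- Let S be a semiring. Then δ = id_S if and only if S is additively idempotent, i.e., x + x = x for every x ∈ S. -/
universe u

section Aux
variable {S : Type*} [PaperSemiring S]

instance : Std.Associative (α := S) (· + ·) := ⟨PaperSemiring.add_assoc⟩
instance : Std.Commutative (α := S) (· + ·) := ⟨PaperSemiring.add_comm⟩

lemma nfoldAdd_idem {x : S} (h : x + x = x) : ∀ n, nfoldAdd n x = x
  | 0 => rfl
  | 1 => rfl
  | n + 2 => by
    show nfoldAdd (n + 1) x + x = x
    rw [nfoldAdd_idem h (n + 1), h]

end Aux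

/-- Let `S` be a semiring.  Then `δ = id_S` if and only if `S` is
additively idempotent. -/
theorem stmt_8 {S : Type*} [PaperSemiring S] :
    (∀ x y : S, deltaRel x y ↔ x = y) ↔ ∀ x : S, x + x = x := by
  constructor
  · intro h x
    have := (h (x + x) x).mp
    apply this
    refine ⟨2, x + x + x + x + x + x + x, x + x, ?_, ?_⟩
    · show x + x + (x + x) + (x + x) + (x + x) = _
      ac_rfl
    · show x + x + x + x = x + x + (x + x)
      ac_rfl
  · intro h x y
    constructor
    · rintro ⟨i, u, v, hu, hv⟩
      rw [nfoldAdd_idem (h x)] at hu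
      rw [nfoldAdd_idem (h y)] at hv
      have hx : x + y = x := by
        conv_lhs => rw [hu]
        rw [PaperSemiring.add_assoc, PaperSemiring.add_comm u y,
          ← PaperSemiring.add_assoc, h y, ← hu]
      have hy : y + x = y := by
        conv_lhs => rw [hv]
        rw [PaperSemiring.add_assoc, PaperSemiring.add_comm v x,
          ← PaperSemiring.add_assoc, h x, ← hv]
      rw [← hx, PaperSemiring.add_comm, hy]
    · rintro rfl
      exact ⟨0, x, x, by rw [nfoldAdd_idem (h x), h x], by rw [nfoldAdd_idem (h x), h x]⟩
end

section
/- Let S be a semiring with a multiplicatively absorbing element w. Then S + w := {x + w : x ∈ S} is a bi-ideal of S; moreover, S + w is a one-element set if and only if w is bi-absorbing, and S + w = S if and only if w is a zero element of S. -/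
universe u

/-- Let `S` be a semiring with a multiplicatively absorbing
element `w`.  Then `S + w` is a bi-ideal of `S`; moreover `S + w` is a
one-element set iff `w` is bi-absorbing, and `S + w = S` iff `w` is a zero
element of `S`. -/
theorem stmt_9 {S : Type*} [PaperSemiring S] (w : S) (hw : MulAbsorbing w) :
    IsBiIdealSet {y : S | ∃ x : S, y = x + w} ∧
      ((∃ z : S, {y : S | ∃ x : S, y = x + w} = {z}) ↔ BiAbsorbing w) ∧
      ({y : S | ∃ x : S, y = x + w} = Set.univ ↔ IsZeroElem w) := by
  have aa := PaperSemiring.add_assoc (S := S)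
  have ac := PaperSemiring.add_comm (S := S)
  have ld := PaperSemiring.left_distrib (S := S)
  have rd := PaperSemiring.right_distrib (S := S)
  -- w + w = w
  have hww : w + w = w := by
    have : w * (w + w) = w * w + w * w := ld w w w
    rw [(hw w).2, (hw (w+w)).2] at this
    exact this.symm
  have hwmem : w ∈ {y : S | ∃ x : S, y = x + w} := ⟨w, hww.symm⟩
  refine ⟨⟨⟨w, hwmem⟩, ?_, ?_⟩, ?_, ?_⟩
  · rintro s a ⟨x, rfl⟩
    exact ⟨s + x, (aa s x w).symm⟩
  · rintro s a ⟨x, rfl⟩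
    constructor
    · exact ⟨s * x, by rw [ld, (hw s).1]⟩
    · exact ⟨x * s, by rw [rd, (hw s).2]⟩
  · constructor
    · rintro ⟨z, hz⟩
      have hwz : w = z := by
        have := hz ▸ hwmem
        exact this
      refine ⟨hw, fun x => ?_⟩
      have : (x + w) ∈ ({z} : Set S) := hz ▸ ⟨x, rfl⟩
      simpa [← hwz] using this
    · rintro ⟨_, hba⟩
      refine ⟨w, Set.eq_singleton_iff_unique_mem.2 ⟨hwmem, ?_⟩⟩
      rintro y ⟨x, rfl⟩
      exact hba x
  · constructor
    · intro hu
      refine ⟨hw, fun x => ?_⟩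
      obtain ⟨y, hy⟩ : ∃ y : S, x = y + w := by
        have : x ∈ {y : S | ∃ x : S, y = x + w} := hu ▸ Set.mem_univ x
        exact this
      rw [hy, aa, hww]
    · rintro ⟨_, hz⟩
      ext x
      simp only [Set.mem_setOf_eq, Set.mem_univ, iff_true]
      exact ⟨x, (hz x).symm⟩
end

section
/- Let S be a semiring with a multiplicatively absorbing element w such that x² ≠ w for every x ∈ S with x ≠ w. Then for every a ∈ S the left annihilator (a:w)_ℓ = {x ∈ S : x·a = w} equals the right annihilator (a:w)_r = {x ∈ S : a·x = w}, and this common set (a:w) is an ideal of S. -/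
universe u

/-- Let `S` be a semiring with a multiplicatively absorbing
element `w` such that `x² ≠ w` for every `x ≠ w`.  Then for every `a ∈ S`
the left annihilator `(a:w)_ℓ` equals the right annihilator `(a:w)_r`, and
this common set `(a:w)` is an ideal of `S`. -/
theorem stmt_10 {S : Type*} [PaperSemiring S] (w : S) (hw : MulAbsorbing w)
    (hnil : ∀ x : S, x ≠ w → x * x ≠ w) (a : S) :
    {x : S | x * a = w} = {x : S | a * x = w} ∧
      IsIdealSet {x : S | x * a = w} := by
  have ma := PaperSemiring.mul_assoc (S := S)
  have hww : w + w = w := by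
    have h1 : (w + w) * w = w := (hw (w + w)).1
    have h2 : (w + w) * w = w + w := by
      rw [PaperSemiring.right_distrib, (hw w).1]
    rw [h2] at h1; exact h1
  have key : ∀ x : S, x * a = w → a * x = w := by
    intro x hx
    by_contra h
    exact hnil (a * x) h (by rw [ma, ← ma x, hx, (hw x).2, (hw a).1])
  have key' : ∀ x : S, a * x = w → x * a = w := by
    intro x hx
    by_contra h
    exact hnil (x * a) h (by rw [ma, ← ma a, hx, (hw a).2, (hw x).1])
  have hset : {x : S | x * a = w} = {x : S | a * x = w} :=
    Set.ext fun x => ⟨key x, key' x⟩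
  refine ⟨hset, ⟨w, (hw a).2⟩, ?_, ?_⟩
  · intro x hx y hy
    show (x + y) * a = w
    rw [PaperSemiring.right_distrib, hx, hy, hww]
  · intro s x hx
    constructor
    · show s * x * a = w
      rw [ma, hx, (hw s).1]
    · show x * s * a = w
      apply key'
      rw [← ma, key x hx, (hw s).2]
end

section
/- Let S be a semiring with a multiplicatively absorbing element w such that x² ≠ w for every x ∈ S with x ≠ w, and let a ∈ S. If α_{(a:w)} = id_S, then w is a zero element of S (w = 0_S), a·b ≠ 0_S ≠ b·a for every b ∈ S with b ≠ w, and either |S| = 1 or a ≠ 0_S. -/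
universe u

/-- Let `S` be a semiring with a multiplicatively absorbing
element `w` such that `x² ≠ w` for every `x ≠ w`, and let `a ∈ S`.  If
`α_{(a:w)} = id_S`, then `w` is a zero element of `S`, `a·b ≠ 0_S ≠ b·a` for
every `b ≠ w`, and either `|S| = 1` or `a ≠ 0_S`. -/
theorem stmt_11 {S : Type*} [PaperSemiring S] (w : S) (hw : MulAbsorbing w)
    (hnil : ∀ x : S, x ≠ w → x * x ≠ w) (a : S)
    (h : ∀ x y : S, alphaRel {x : S | x * a = w} x y ↔ x = y) :
    IsZeroElem w ∧ (∀ b : S, b ≠ w → a * b ≠ w ∧ b * a ≠ w) ∧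
      ((∀ x y : S, x = y) ∨ a ≠ w) := by
  have hwI : w * a = w := (hw a).2
  have key : ∀ u v : S, u * a = w → v * a = w → u = v := fun u v hu hv =>
    (h u v).mp ⟨v, hv, u, hu, PaperSemiring.add_comm u v⟩
  have hww : w + w = w := by
    have h1 : w * (w + w) = w := (hw (w + w)).2
    have h2 : w * (w + w) = w + w := by
      rw [PaperSemiring.left_distrib, (hw w).1]
    rw [h2] at h1; exact h1
  have hzero : ∀ x : S, x + w = x := fun x =>
    (h (x + w) x).mp ⟨w, hwI, w, hwI, by rw [PaperSemiring.add_assoc, hww]⟩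
  have hswap : ∀ b c : S, b * c = w → c * b = w := by
    intro b c hbc
    by_contra hne
    exact hnil _ hne (by
      rw [PaperSemiring.mul_assoc c b (c * b), ← PaperSemiring.mul_assoc b c b,
        hbc, (hw b).2, (hw c).1])
  refine ⟨⟨hw, hzero⟩, ?_, ?_⟩
  · intro b hb
    exact ⟨fun hab => hb (key b w (hswap a b hab) hwI),
      fun hba => hb (key b w hba hwI)⟩
  · by_cases hA : a = w
    · left
      have hall : ∀ x : S, x = w := fun x => key x w (by rw [hA]; exact (hw x).1) hwI
      intro x y; rw [hall x, hall y]
    · right; exact hA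
end

section
/- Let S be a semiring with a zero element 0_S that is multiplicatively absorbing, such that x² ≠ 0_S for every x ∈ S with x ≠ 0_S, and let a ∈ S. Then 0_S ∈ (a:0_S), and (a:0_S) is a block of the congruence α_{(a:0_S)}; that is, (a:0_S) is exactly the equivalence class of 0_S: whenever (x, 0_S) ∈ α_{(a:0_S)}, one has x ∈ (a:0_S). -/
universe u

/-- Let `S` be a semiring with a zero element `0_S` (which is
multiplicatively absorbing) such that `x² ≠ 0_S` for every `x ≠ 0_S`, and let
`a ∈ S`.  Then `0_S ∈ (a:0_S)` and `(a:0_S)` is a block of the congruence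
`α_{(a:0_S)}`, i.e. it is exactly the equivalence class of `0_S`. -/
theorem stmt_12 {S : Type*} [PaperSemiring S] (z : S) (hz : IsZeroElem z)
    (hnil : ∀ x : S, x ≠ z → x * x ≠ z) (a : S) :
    z ∈ {x : S | x * a = z} ∧
      ∀ x : S, alphaRel {y : S | y * a = z} x z ↔ x * a = z := by
  obtain ⟨habs, hneu⟩ := hz
  refine ⟨(habs a).2, fun x => ⟨?_, fun hx => ⟨z, (habs a).2, x, hx, ?_⟩⟩⟩
  · rintro ⟨u, hu, v, hv, h⟩
    have hzv : z + v = v := by rw [PaperSemiring.add_comm, hneu]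
    rw [hzv] at h
    have := congrArg (· * a) h
    simp only [PaperSemiring.right_distrib] at this
    rw [hu, hv, hneu] at this
    exact this
  · rw [hneu, PaperSemiring.add_comm, hneu]
end

section
/- Let S be a semiring with a zero element 0_S that is multiplicatively absorbing, such that x² ≠ 0_S for every x ∈ S with x ≠ 0_S, and let a ∈ S. If α_{(a:0_S)} = S×S, then a = 0_S. -/
universe u

/-- Let `S` be a semiring with a zero element `0_S` (which is
multiplicatively absorbing) such that `x² ≠ 0_S` for every `x ≠ 0_S`, and let
`a ∈ S`.  If `α_{(a:0_S)} = S×S`, then `a = 0_S`. -/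
theorem stmt_13 {S : Type*} [PaperSemiring S] (z : S) (hz : IsZeroElem z)
    (hnil : ∀ x : S, x ≠ z → x * x ≠ z) (a : S)
    (h : ∀ x y : S, alphaRel {x : S | x * a = z} x y) :
    a = z := by
  by_contra hne
  apply hnil a hne
  obtain ⟨u, hu, v, hv, huv⟩ := h a z
  have h1 : (a + u) * a = a * a := by
    rw [PaperSemiring.right_distrib, hu, hz.2]
  have h2 : (z + v) * a = z := by
    rw [PaperSemiring.right_distrib, hv, (hz.1 a).2, hz.2]
  rw [← h1, huv, h2]
end

section
/- Let S be a semiring with a bi-absorbing element o_S such that x² ≠ o_S for every x ∈ S with x ≠ o_S, and let a ∈ S. Then (a:o_S) is a bi-ideal of S and α_{(a:o_S)} = S×S. -/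
universe u

/-- Let `S` be a semiring with a bi-absorbing element `o_S` such
that `x² ≠ o_S` for every `x ≠ o_S`, and let `a ∈ S`.  Then `(a:o_S)` is a
bi-ideal of `S` and `α_{(a:o_S)} = S×S`. -/
theorem stmt_14 {S : Type*} [PaperSemiring S] (o : S) (ho : BiAbsorbing o)
    (hnil : ∀ x : S, x ≠ o → x * x ≠ o) (a : S) :
    IsBiIdealSet {x : S | x * a = o} ∧
      ∀ x y : S, alphaRel {x : S | x * a = o} x y := by
  obtain ⟨hmul, hadd⟩ := ho
  have hoa : o * a = o := (hmul a).2
  -- key: x * a = o → a * x = o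
  have key : ∀ x : S, x * a = o → a * x = o := by
    intro x hx
    by_contra h
    apply hnil (a * x) h
    calc (a * x) * (a * x) = a * ((x * a) * x) := by
          simp only [PaperSemiring.mul_assoc]
      _ = o := by rw [hx, (hmul x).2, (hmul a).1]
  constructor
  · refine ⟨⟨o, hoa⟩, ?_, ?_⟩
    · intro s x hx
      show (s + x) * a = o
      rw [PaperSemiring.right_distrib, hx, hadd]
    · intro s x hx
      refine ⟨?_, ?_⟩
      · show (s * x) * a = o
        rw [PaperSemiring.mul_assoc, hx, (hmul s).1]
      · show (x * s) * a = o
        by_contra h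
        apply hnil _ h
        calc ((x * s) * a) * ((x * s) * a)
            = x * (s * ((a * x) * (s * a))) := by
              simp only [PaperSemiring.mul_assoc]
          _ = o := by rw [key x hx, (hmul (s*a)).2, (hmul s).1, (hmul x).1]
  · intro x y
    exact ⟨o, hoa, o, hoa, by rw [hadd, hadd]⟩
end

section
/- Let S be a congruence-simple semiring with a multiplicatively absorbing element w such that x² ≠ w for every x ∈ S with x ≠ w. Then either w is a zero element of S (w = 0_S) or w is a bi-absorbing element of S (w = o_S). -/
universe u

/-- Let `S` be a congruence-simple semiring with a
multiplicatively absorbing element `w` such that `x² ≠ w` for every `x ≠ w`.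
Then either `w = 0_S` (a zero element) or `w = o_S` (a bi-absorbing element). -/
theorem stmt_15 {S : Type*} [PaperSemiring S] (hs : CongSimple S) (w : S)
    (hw : MulAbsorbing w) (hnil : ∀ x : S, x ≠ w → x * x ≠ w) :
    (∀ x : S, x + w = x) ∨ ∀ x : S, x + w = w := by
  have hww : w + w = w := by
    have h1 := (hw (w + w)).2
    rw [PaperSemiring.left_distrib, (hw w).2] at h1
    exact h1
  have key : ∀ a b c : S, a + w = b + w → a * c + w = b * c + w := by
    intro a b c h
    have h2 := congrArg (· * c) h
    simpa [PaperSemiring.right_distrib, (hw c).2] using h2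
  have key2 : ∀ a b c : S, a + w = b + w → c * a + w = c * b + w := by
    intro a b c h
    have h2 := congrArg (c * ·) h
    simpa [PaperSemiring.left_distrib, (hw c).1] using h2
  have hr : IsCongruence (fun x y : S => x + w = y + w) := by
    refine ⟨⟨fun x => rfl, fun h => h.symm, fun h1 h2 => h1.trans h2⟩, ?_, ?_⟩
    · intro x x' y y' hx hy
      haveI : Std.Associative (fun a b : S => a + b) := ⟨PaperSemiring.add_assoc⟩
      haveI : Std.Commutative (fun a b : S => a + b) := ⟨PaperSemiring.add_comm⟩
      have e1 : (x + y) + w = (x + w) + (y + w) := by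
        have h : (x + y) + (w + w) = (x + w) + (y + w) := by ac_rfl
        rwa [hww] at h
      have e2 : (x' + y') + w = (x' + w) + (y' + w) := by
        have h : (x' + y') + (w + w) = (x' + w) + (y' + w) := by ac_rfl
        rwa [hww] at h
      rw [e1, e2, hx, hy]
    · intro x x' y y' hx hy
      exact (key x x' y hx).trans (key2 y y' x' hy)
  rcases hs.2 _ hr with hid | hfull
  · left
    intro x
    have : (x + w) + w = x + w := by rw [PaperSemiring.add_assoc, hww]
    exact (hid (x + w) x).1 this
  · right
    intro x
    have := hfull x w
    rwa [hww] at this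
end

section
/- Let S be a congruence-simple semiring with a multiplicatively absorbing element w such that x² ≠ w for every x ∈ S with x ≠ w. Then a·b ≠ w for all a, b ∈ S with a ≠ w and b ≠ w (i.e., S has no non-trivial zero-divisors with respect to w). -/
universe u

/-! ### Auxiliary material for Statement 16 -/

section Stmt16Aux

instance (priority := 100) PaperSemiring.toAddCommSemigroup (S : Type*) [PaperSemiring S] :
    AddCommSemigroup S :=
  { add_assoc := PaperSemiring.add_assoc, add_comm := PaperSemiring.add_comm }

instance (priority := 100) PaperSemiring.toSemigroup (S : Type*) [PaperSemiring S] :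
    Semigroup S :=
  { mul_assoc := PaperSemiring.mul_assoc }

instance (priority := 100) PaperSemiring.toDistrib (S : Type*) [PaperSemiring S] :
    Distrib S :=
  { left_distrib := PaperSemiring.left_distrib, right_distrib := PaperSemiring.right_distrib }

variable {S : Type*} [PaperSemiring S]

/-- `rAdd n x = (n+1)·x`. -/
private def rAdd : ℕ → S → S
  | 0, x => x
  | n + 1, x => rAdd n x + x

private lemma rAdd_add (n m : ℕ) (x : S) : rAdd (n + m + 1) x = rAdd n x + rAdd m x := by
  induction m with
  | zero => rfl
  | succ m ih =>
      show rAdd (n + m + 1) x + x = rAdd n x + (rAdd m x + x)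
      rw [ih, add_assoc]

private lemma rAdd_mul_r (n : ℕ) (x s : S) : rAdd n x * s = rAdd n (x * s) := by
  induction n with
  | zero => rfl
  | succ n ih => show (rAdd n x + x) * s = rAdd n (x * s) + x * s; rw [add_mul, ih]

private lemma rAdd_mul_l (n : ℕ) (x s : S) : s * rAdd n x = rAdd n (s * x) := by
  induction n with
  | zero => rfl
  | succ n ih => show s * (rAdd n x + x) = rAdd n (s * x) + s * x; rw [mul_add, ih]

private lemma chain16 {x y z i j i' j' : S} (h : x + i = y + j) (h' : y + i' = z + j') :
    x + (i + i') = z + (j' + j) := by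
  calc x + (i + i') = (x + i) + i' := (add_assoc ..).symm
    _ = (y + j) + i' := by rw [h]
    _ = (y + i') + j := by rw [add_assoc, add_comm j i', ← add_assoc]
    _ = (z + j') + j := by rw [h']
    _ = z + (j' + j) := add_assoc ..

private lemma add4 {x y x' y' i j i' j' : S} (h : x + i = y + j) (h' : x' + i' = y' + j') :
    (x + x') + (i + i') = (y + y') + (j + j') := by
  calc (x + x') + (i + i') = (x + i) + (x' + i') := by ac_rfl
    _ = (y + j) + (y' + j') := by rw [h, h']
    _ = (y + y') + (j + j') := by ac_rfl

/-- The congruence `π`: `x π y` iff `x + n·w = y + n·w` for some `n ≥ 1`. -/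
private lemma pRel_cong (w : S) (hw : MulAbsorbing w) :
    IsCongruence (fun x y : S => ∃ n : ℕ, x + rAdd n w = y + rAdd n w) := by
  have hAr : ∀ (s : S) (n : ℕ), rAdd n w * s = rAdd n w := fun s n => by
    rw [rAdd_mul_r, (hw s).2]
  have hAl : ∀ (s : S) (n : ℕ), s * rAdd n w = rAdd n w := fun s n => by
    rw [rAdd_mul_l, (hw s).1]
  have htr : ∀ {x y z : S}, (∃ n, x + rAdd n w = y + rAdd n w) →
      (∃ n, y + rAdd n w = z + rAdd n w) → ∃ n, x + rAdd n w = z + rAdd n w := by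
    rintro x y z ⟨n, h⟩ ⟨m, h'⟩
    exact ⟨n + m + 1, by
      rw [rAdd_add]
      exact (chain16 h h').trans (congrArg (z + ·) (add_comm _ _))⟩
  refine ⟨⟨fun x => ⟨0, rfl⟩, fun ⟨n, h⟩ => ⟨n, h.symm⟩, htr⟩, ?_, ?_⟩
  · rintro x x' y y' ⟨n, h⟩ ⟨m, h'⟩
    exact ⟨n + m + 1, by rw [rAdd_add]; exact add4 h h'⟩
  · rintro x x' y y' ⟨n, h⟩ ⟨m, h'⟩
    have e1 : x * y + rAdd n w = x' * y + rAdd n w := by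
      have := congrArg (· * y) h
      simpa only [add_mul, hAr] using this
    have e2 : x' * y + rAdd m w = x' * y' + rAdd m w := by
      have := congrArg (x' * ·) h'
      simpa only [mul_add, hAl] using this
    exact htr ⟨n, e1⟩ ⟨m, e2⟩

/-- The congruence `τ`: `x τ y` iff `x + n·w = y + m·w` for some `n, m ≥ 1`. -/
private lemma tRel_cong (w : S) (hw : MulAbsorbing w) :
    IsCongruence (fun x y : S => ∃ n m : ℕ, x + rAdd n w = y + rAdd m w) := by
  have hAr : ∀ (s : S) (n : ℕ), rAdd n w * s = rAdd n w := fun s n => by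
    rw [rAdd_mul_r, (hw s).2]
  have hAl : ∀ (s : S) (n : ℕ), s * rAdd n w = rAdd n w := fun s n => by
    rw [rAdd_mul_l, (hw s).1]
  have htr : ∀ {x y z : S}, (∃ n m, x + rAdd n w = y + rAdd m w) →
      (∃ n m, y + rAdd n w = z + rAdd m w) → ∃ n m, x + rAdd n w = z + rAdd m w := by
    rintro x y z ⟨n, m, h⟩ ⟨n', m', h'⟩
    exact ⟨n + n' + 1, m' + m + 1, by rw [rAdd_add, rAdd_add]; exact chain16 h h'⟩
  refine ⟨⟨fun x => ⟨0, 0, rfl⟩, fun ⟨n, m, h⟩ => ⟨m, n, h.symm⟩, htr⟩, ?_, ?_⟩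
  · rintro x x' y y' ⟨n, m, h⟩ ⟨n', m', h'⟩
    exact ⟨n + n' + 1, m + m' + 1, by rw [rAdd_add, rAdd_add]; exact add4 h h'⟩
  · rintro x x' y y' ⟨n, m, h⟩ ⟨n', m', h'⟩
    have e1 : x * y + rAdd n w = x' * y + rAdd m w := by
      have := congrArg (· * y) h
      simpa only [add_mul, hAr] using this
    have e2 : x' * y + rAdd n' w = x' * y' + rAdd m' w := by
      have := congrArg (x' * ·) h'
      simpa only [mul_add, hAl] using this
    exact htr ⟨n, m, e1⟩ ⟨n', m', e2⟩

/-- The congruence `θ`: `x θ y` iff `x + w = y + w` (needs `w + w = w`). -/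
private lemma qRel_cong (w : S) (hw : MulAbsorbing w) (hww : w + w = w) :
    IsCongruence (fun x y : S => x + w = y + w) := by
  refine ⟨⟨fun x => rfl, fun h => h.symm, fun h h' => h.trans h'⟩, ?_, ?_⟩
  · intro x x' y y' h h'
    calc (x + y) + w = (x + y) + (w + w) := by rw [hww]
      _ = (x + w) + (y + w) := by ac_rfl
      _ = (x' + w) + (y' + w) := by rw [h, h']
      _ = (x' + y') + (w + w) := by ac_rfl
      _ = (x' + y') + w := by rw [hww]
  · intro x x' y y' h h'
    have e1 : x * y + w = x' * y + w := by
      have := congrArg (· * y) h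
      simpa only [add_mul, (hw y).2] using this
    have e2 : x' * y + w = x' * y' + w := by
      have := congrArg (x' * ·) h'
      simpa only [mul_add, (hw x').1] using this
    exact e1.trans e2

/-- The congruence `α_K` for a suitable set `K`. -/
private lemma alpha_cong (K : S → Prop) (e : S) (Ke : K e)
    (Kadd : ∀ i j : S, K i → K j → K (i + j))
    (Kl : ∀ s i : S, K i → K (s * i)) (Kr : ∀ i s : S, K i → K (i * s)) :
    IsCongruence (fun x y : S => ∃ i, K i ∧ ∃ j, K j ∧ x + i = y + j) := by
  have htr : ∀ {x y z : S}, (∃ i, K i ∧ ∃ j, K j ∧ x + i = y + j) →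
      (∃ i, K i ∧ ∃ j, K j ∧ y + i = z + j) →
      ∃ i, K i ∧ ∃ j, K j ∧ x + i = z + j := by
    rintro x y z ⟨i, hi, j, hj, h⟩ ⟨i', hi', j', hj', h'⟩
    exact ⟨i + i', Kadd _ _ hi hi', j' + j, Kadd _ _ hj' hj, chain16 h h'⟩
  refine ⟨⟨fun x => ⟨e, Ke, e, Ke, rfl⟩,
    fun ⟨i, hi, j, hj, h⟩ => ⟨j, hj, i, hi, h.symm⟩, htr⟩, ?_, ?_⟩
  · rintro x x' y y' ⟨i, hi, j, hj, h⟩ ⟨i', hi', j', hj', h'⟩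
    exact ⟨i + i', Kadd _ _ hi hi', j + j', Kadd _ _ hj hj', add4 h h'⟩
  · rintro x x' y y' ⟨i, hi, j, hj, h⟩ ⟨i', hi', j', hj', h'⟩
    have e1 : ∃ i, K i ∧ ∃ j, K j ∧ x * y + i = x' * y + j :=
      ⟨i * y, Kr _ _ hi, j * y, Kr _ _ hj, by
        have := congrArg (· * y) h
        simpa only [add_mul] using this⟩
    have e2 : ∃ i, K i ∧ ∃ j, K j ∧ x' * y + i = x' * y' + j :=
      ⟨x' * i', Kl _ _ hi', x' * j', Kl _ _ hj', by
        have := congrArg (x' * ·) h'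
        simpa only [mul_add] using this⟩
    exact htr e1 e2

/-- The congruence `β_K` for a bi-ideal `K`. -/
private lemma beta_cong (K : S → Prop)
    (Kaddl : ∀ s i : S, K i → K (s + i))
    (Kl : ∀ s i : S, K i → K (s * i)) (Kr : ∀ i s : S, K i → K (i * s)) :
    IsCongruence (fun x y : S => (K x ∧ K y) ∨ x = y) := by
  refine ⟨⟨fun x => Or.inr rfl, ?_, ?_⟩, ?_, ?_⟩
  · rintro x y (⟨h1, h2⟩ | rfl)
    · exact Or.inl ⟨h2, h1⟩
    · exact Or.inr rfl
  · rintro x y z (⟨h1, h2⟩ | rfl) (⟨h3, h4⟩ | rfl)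
    · exact Or.inl ⟨h1, h4⟩
    · exact Or.inl ⟨h1, h2⟩
    · exact Or.inl ⟨h3, h4⟩
    · exact Or.inr rfl
  · rintro x x' y y' (⟨h1, h2⟩ | rfl) (⟨h3, h4⟩ | rfl)
    · exact Or.inl ⟨add_comm y x ▸ Kaddl y x h1, add_comm y' x' ▸ Kaddl y' x' h2⟩
    · exact Or.inl ⟨add_comm y x ▸ Kaddl y x h1, add_comm y x' ▸ Kaddl y x' h2⟩
    · exact Or.inl ⟨Kaddl x y h3, Kaddl x y' h4⟩
    · exact Or.inr rfl
  · rintro x x' y y' (⟨h1, h2⟩ | rfl) (⟨h3, h4⟩ | rfl)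
    · exact Or.inl ⟨Kr x y h1, Kr x' y' h2⟩
    · exact Or.inl ⟨Kr x y h1, Kr x' y h2⟩
    · exact Or.inl ⟨Kl x y h3, Kl x y' h4⟩
    · exact Or.inr rfl

end Stmt16Aux

/-- Let `S` be a congruence-simple semiring with a
multiplicatively absorbing element `w` such that `x² ≠ w` for every `x ≠ w`.
Then `a·b ≠ w` for all `a, b ∈ S` with `a ≠ w` and `b ≠ w`. -/
theorem stmt_16 {S : Type*} [PaperSemiring S] (hs : CongSimple S) (w : S)
    (hw : MulAbsorbing w) (hnil : ∀ x : S, x ≠ w → x * x ≠ w) :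
    ∀ a b : S, a ≠ w → b ≠ w → a * b ≠ w := by
  obtain ⟨-, hmin⟩ := hs
  intro a b ha hb hab
  have sqr : ∀ x : S, x * x = w → x = w := by
    intro x h
    by_contra hx
    exact hnil x hx h
  -- basic multiplicative facts
  have hba : b * a = w := by
    apply sqr
    calc (b * a) * (b * a) = b * ((a * b) * a) := by simp only [mul_assoc]
      _ = w := by rw [hab, (hw a).2, (hw b).1]
  have haxb : ∀ x : S, a * (x * b) = w := by
    intro x
    apply sqr
    have key : b * (a * (x * b)) = w := by rw [← mul_assoc, hba, (hw (x * b)).2]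
    calc (a * (x * b)) * (a * (x * b)) = a * (x * (b * (a * (x * b)))) := by
          simp only [mul_assoc]
      _ = w := by rw [key, (hw x).1, (hw a).1]
  -- the key set K
  set K : S → Prop := fun x => x * b = w ∧ ∀ t : S, x * (t * b) = w with hKdef
  have KW : K w := ⟨(hw b).2, fun t => (hw (t * b)).2⟩
  have Ka : K a := ⟨hab, haxb⟩
  have Kl : ∀ s i : S, K i → K (s * i) := by
    rintro s i ⟨h1, h2⟩
    exact ⟨by rw [mul_assoc, h1, (hw s).1], fun t => by rw [mul_assoc, h2 t, (hw s).1]⟩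
  have Kr : ∀ i s : S, K i → K (i * s) := by
    rintro i s ⟨h1, h2⟩
    refine ⟨by rw [mul_assoc]; exact h2 s, fun t => ?_⟩
    rw [mul_assoc, ← mul_assoc s t b]
    exact h2 (s * t)
  -- the zero-element case leads to a contradiction
  have zeroCase : (∀ x : S, x + w = x) → False := by
    intro hz
    have hww : w + w = w := hz w
    have Kadd : ∀ i j : S, K i → K j → K (i + j) := by
      rintro i j ⟨h1, h2⟩ ⟨h1', h2'⟩
      exact ⟨by rw [add_mul, h1, h1', hww], fun t => by rw [add_mul, h2 t, h2' t, hww]⟩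
    rcases hmin _ (alpha_cong K w KW Kadd Kl Kr) with hid | hfull
    · exact ha ((hid a w).1 ⟨w, KW, a, Ka, add_comm a w⟩)
    · obtain ⟨i, hi, j, hj, h⟩ := hfull b w
      have hbb : b * b + w = w := by
        have := congrArg (· * b) h
        simpa only [add_mul, hi.1, hj.1, (hw b).2, hww] using this
      exact hnil b hb (by rw [← hz (b * b), hbb])
  -- the bi-absorbing case leads to a contradiction
  have biCase : (∀ x : S, x + w = w) → False := by
    intro hz
    have Kaddl : ∀ s i : S, K i → K (s + i) := by
      rintro s i ⟨h1, h2⟩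
      refine ⟨by rw [add_mul, h1, hz], fun t => by rw [add_mul, h2 t, hz]⟩
    rcases hmin _ (beta_cong K Kaddl Kl Kr) with hid | hfull
    · exact ha ((hid a w).1 (Or.inl ⟨Ka, KW⟩))
    · rcases hfull b w with ⟨hbK, -⟩ | hbw
      · exact hnil b hb hbK.1
      · exact hb hbw
  -- absorption facts for rAdd
  have hAr : ∀ (s : S) (n : ℕ), rAdd n w * s = rAdd n w := fun s n => by
    rw [rAdd_mul_r, (hw s).2]
  have hAl : ∀ (s : S) (n : ℕ), s * rAdd n w = rAdd n w := fun s n => by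
    rw [rAdd_mul_l, (hw s).1]
  -- main case analysis on the congruence π
  rcases hmin _ (pRel_cong w hw) with pid | pfull
  · -- π is the identity; now use τ
    rcases hmin _ (tRel_cong w hw) with tid | tfull
    · -- τ identity ⇒ w is a zero element
      apply zeroCase
      intro x
      refine (tid (x + w) x).1 ⟨0, 1, ?_⟩
      show (x + w) + w = x + (w + w)
      rw [add_assoc]
    · -- τ full ⇒ contradiction via π identity
      obtain ⟨n, m, hnm⟩ := tfull a w
      have h2 : w + rAdd n w = w + rAdd m w := by
        have := congrArg (b * ·) hnm
        simpa only [mul_add, hba, hAl, (hw b).1] using this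
      have : a + rAdd n w = w + rAdd n w := by rw [hnm, ← h2]
      exact ha ((pid a w).1 ⟨n, this⟩)
  · -- π full ⇒ w + w = w
    obtain ⟨n, hn⟩ := pfull (w + w) w
    -- hn : (w + w) + rAdd n w = w + rAdd n w
    have hz : w + (w + rAdd n w) = w + rAdd n w := by
      calc w + (w + rAdd n w) = (w + w) + rAdd n w := (add_assoc ..).symm
        _ = w + rAdd n w := hn
    have hzabs : ∀ s : S, (w + rAdd n w) * s = w + rAdd n w ∧
        s * (w + rAdd n w) = w + rAdd n w := fun s =>
      ⟨by rw [add_mul, (hw s).2, hAr], by rw [mul_add, (hw s).1, hAl]⟩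
    have hzw : w + rAdd n w = w := ((hzabs w).1).symm.trans ((hw (w + rAdd n w)).1)
    have hww : w + w = w := by
      have := hz
      rw [hzw] at this
      exact this
    -- now use θ
    rcases hmin _ (qRel_cong w hw hww) with qid | qfull
    · apply zeroCase
      intro x
      refine (qid (x + w) x).1 ?_
      show (x + w) + w = x + w
      rw [add_assoc, hww]
    · apply biCase
      intro x
      have := qfull x w
      rwa [hww] at this
end

section
/- Let S be a congruence-simple semiring with a bi-absorbing element o_S such that x² ≠ o_S for every x ∈ S with x ≠ o_S. Then exactly one of the following holds: (1) S is isomorphic to the two-element semiring 𝕋₈; (2) S + S = S and a·b ≠ o_S for all a, b ∈ S with a ≠ o_S and b ≠ o_S. -/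
universe u

section Aux

variable {S : Type u} [PaperSemiring S]

lemma beta_cong_s17 {J : Set S} (hJ : IsBiIdealSet J) : IsCongruence (betaRel J) := by
  obtain ⟨-, hadd, hmul⟩ := hJ
  refine ⟨⟨fun x => Or.inr rfl, ?_, ?_⟩, ?_, ?_⟩
  · rintro x y (⟨hx, hy⟩ | rfl)
    · exact Or.inl ⟨hy, hx⟩
    · exact Or.inr rfl
  · rintro x y z (⟨hx, hy⟩ | rfl) (⟨hy', hz⟩ | rfl)
    · exact Or.inl ⟨hx, hz⟩
    · exact Or.inl ⟨hx, hy⟩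
    · exact Or.inl ⟨hy', hz⟩
    · exact Or.inr rfl
  · rintro x x' y y' (⟨hx, hx'⟩ | rfl) (⟨hy, hy'⟩ | rfl)
    · exact Or.inl ⟨hadd x y hy, hadd x' y' hy'⟩
    · exact Or.inl ⟨(PaperSemiring.add_comm x y) ▸ hadd y x hx, (PaperSemiring.add_comm x' y) ▸ hadd y x' hx'⟩
    · exact Or.inl ⟨hadd x y hy, hadd x y' hy'⟩
    · exact Or.inr rfl
  · rintro x x' y y' (⟨hx, hx'⟩ | rfl) (⟨hy, hy'⟩ | rfl)
    · exact Or.inl ⟨(hmul x y hy).1, (hmul x' y' hy').1⟩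
    · exact Or.inl ⟨(hmul y x hx).2, (hmul y x' hx').2⟩
    · exact Or.inl ⟨(hmul x y hy).1, (hmul x y' hy').1⟩
    · exact Or.inr rfl

lemma biideal_dichotomy (hs : CongSimple S) {J : Set S} (hJ : IsBiIdealSet J) :
    (∀ x ∈ J, ∀ y ∈ J, x = y) ∨ ∀ z : S, z ∈ J := by
  rcases hs.2 (betaRel J) (beta_cong_s17 hJ) with h | h
  · left
    intro x hx y hy
    exact (h x y).1 (Or.inl ⟨hx, hy⟩)
  · right
    intro z
    by_contra hz
    obtain ⟨x, y, hxy⟩ := hs.1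
    have hx : z = x := by
      rcases h z x with ⟨hz', -⟩ | h' 
      · exact absurd hz' hz
      · exact h'
    have hy : z = y := by
      rcases h z y with ⟨hz', -⟩ | h'
      · exact absurd hz' hz
      · exact h'
    exact hxy (hx ▸ hy)

lemma symm_zero {o : S} (ho : BiAbsorbing o) (hnil : ∀ x : S, x ≠ o → x * x ≠ o)
    {u v : S} (h : u * v = o) : v * u = o := by
  by_contra hvu
  apply hnil (v * u) hvu
  calc v * u * (v * u) = v * (u * (v * u)) := PaperSemiring.mul_assoc v u (v * u)
    _ = v * (u * v * u) := by rw [PaperSemiring.mul_assoc u v u]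
    _ = v * (o * u) := by rw [h]
    _ = v * o := by rw [(ho.1 u).2]
    _ = o := (ho.1 v).1

lemma no_zero_div (hs : CongSimple S) {o : S} (ho : BiAbsorbing o)
    (hnil : ∀ x : S, x ≠ o → x * x ≠ o) :
    ∀ a b : S, a ≠ o → b ≠ o → a * b ≠ o := by
  intro a b ha hb hab
  have hba : b * a = o := symm_zero ho hnil hab
  have hJ : IsBiIdealSet {x : S | x * a = o} := by
    refine ⟨⟨o, (ho.1 a).2⟩, ?_, ?_⟩
    · intro s x hx
      show (s + x) * a = o
      rw [PaperSemiring.right_distrib, hx, ho.2 (s * a)]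
    · intro s x hx
      constructor
      · show s * x * a = o
        rw [PaperSemiring.mul_assoc, hx, (ho.1 s).1]
      · show x * s * a = o
        have hax : a * x = o := symm_zero ho hnil hx
        apply symm_zero ho hnil
        show a * (x * s) = o
        rw [← PaperSemiring.mul_assoc, hax, (ho.1 s).2]
  rcases biideal_dichotomy hs hJ with h | h
  · exact hb (h b hba o (ho.1 a).2)
  · exact hnil a ha (h a)

end Aux

/-- Let `S` be a congruence-simple semiring with a bi-absorbing
element `o_S` such that `x² ≠ o_S` for every `x ≠ o_S`.  Then exactly one of
the following holds: (1) `S ≅ 𝕋₈`; (2) `S + S = S` and `a·b ≠ o_S` for all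
`a, b ≠ o_S`. -/
theorem stmt_17 {S : Type*} [PaperSemiring S] (hs : CongSimple S) (o : S)
    (ho : BiAbsorbing o) (hnil : ∀ x : S, x ≠ o → x * x ≠ o) :
    (SIso S T8 ∧
        ¬((∀ c : S, ∃ x y : S, x + y = c) ∧
          ∀ a b : S, a ≠ o → b ≠ o → a * b ≠ o)) ∨
      (¬SIso S T8 ∧
        (∀ c : S, ∃ x y : S, x + y = c) ∧
          ∀ a b : S, a ≠ o → b ≠ o → a * b ≠ o) := by
  classical
  obtain ⟨x0, y0, hx0y0⟩ := hs.1
  have hu : ∃ u : S, u ≠ o := by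
    by_cases h : x0 = o
    · exact ⟨y0, fun hy => hx0y0 (h.trans hy.symm)⟩
    · exact ⟨x0, h⟩
  obtain ⟨u, hu⟩ := hu
  have hzd : ∀ a b : S, a ≠ o → b ≠ o → a * b ≠ o := no_zero_div hs ho hnil
  -- the set S + S is a bi-ideal
  have hT : IsBiIdealSet {c : S | ∃ x y : S, x + y = c} := by
    refine ⟨⟨o, o, o, ho.2 o⟩, ?_, ?_⟩
    · rintro s c ⟨x, y, rfl⟩
      exact ⟨s + x, y, (PaperSemiring.add_assoc s x y).symm ▸ rfl⟩
    · rintro s c ⟨x, y, rfl⟩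
      exact ⟨⟨s * x, s * y, (PaperSemiring.left_distrib s x y).symm⟩,
        ⟨x * s, y * s, (PaperSemiring.right_distrib x y s).symm⟩⟩
  rcases biideal_dichotomy hs hT with hsub | hfull
  · -- S + S = {o}: S is isomorphic to T8
    left
    have hsum : ∀ x y : S, x + y = o := fun x y =>
      hsub (x + y) ⟨x, y, rfl⟩ o ⟨o, o, ho.2 o⟩
    -- the two-class relation is a congruence
    set r : S → S → Prop := fun x y => x = y ∨ (x ≠ o ∧ y ≠ o) with hr
    have hrc : IsCongruence r := by
      refine ⟨⟨fun x => Or.inl rfl, ?_, ?_⟩, ?_, ?_⟩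
      · rintro x y (rfl | ⟨h1, h2⟩)
        · exact Or.inl rfl
        · exact Or.inr ⟨h2, h1⟩
      · rintro x y z (rfl | ⟨h1, h2⟩) (rfl | ⟨h3, h4⟩)
        · exact Or.inl rfl
        · exact Or.inr ⟨h3, h4⟩
        · exact Or.inr ⟨h1, h2⟩
        · exact Or.inr ⟨h1, h4⟩
      · intro x x' y y' _ _
        exact Or.inl ((hsum x y).trans (hsum x' y').symm)
      · rintro x x' y y' (rfl | ⟨hx, hx'⟩) (rfl | ⟨hy, hy'⟩)
        · exact Or.inl rfl
        · by_cases hx : x = o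
          · subst hx
            exact Or.inl (((ho.1 y).2).trans ((ho.1 y').2).symm)
          · exact Or.inr ⟨hzd x y hx hy, hzd x y' hx hy'⟩
        · by_cases hy : y = o
          · subst hy
            exact Or.inl (((ho.1 x).1).trans ((ho.1 x').1).symm)
          · exact Or.inr ⟨hzd x y hx hy, hzd x' y hx' hy⟩
        · exact Or.inr ⟨hzd x y hx hy, hzd x' y' hx' hy'⟩
    have hrid : ∀ x y : S, r x y ↔ x = y := by
      rcases hs.2 r hrc with h | h
      · exact h
      · exfalso
        rcases h o u with h' | ⟨h', -⟩
        · exact hu h'.symm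
        · exact h' rfl
    -- every nonzero element equals u
    have huniq : ∀ v : S, v ≠ o → v = u := fun v hv =>
      (hrid v u).1 (Or.inr ⟨hv, hu⟩)
    have huu : u * u = u := by
      have := hzd u u hu hu
      exact huniq (u * u) this
    -- build the isomorphism
    let f : S → T8 := fun x => if x = o then T8.a else T8.b
    let g : T8 → S := fun t => match t with | .a => o | .b => u
    have hfo : f o = T8.a := if_pos rfl
    have hfu : ∀ v : S, v ≠ o → f v = T8.b := fun v hv => if_neg hv
    refine ⟨⟨⟨f, g, ?_, ?_⟩, ?_, ?_⟩, ?_⟩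
    · intro x
      by_cases hx : x = o
      · subst hx; simp [f, g]
      · have : f x = T8.b := if_neg hx
        show g (f x) = x
        rw [this]
        exact (huniq x hx).symm
    · intro t
      cases t
      · show f o = T8.a
        exact hfo
      · show f u = T8.b
        exact hfu u hu
    · intro x y
      show f (x + y) = f x + f y
      rw [hsum x y, hfo]
      rfl
    · intro x y
      show f (x * y) = f x * f y
      by_cases hx : x = o
      · subst hx
        rw [(ho.1 y).2, hfo]
        cases hfy : f y <;> rfl
      · by_cases hy : y = o
        · subst hy
          rw [(ho.1 x).1, hfo, hfu x hx]
          rfl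
        · rw [hfu x hx, hfu y hy, hfu (x * y) (hzd x y hx hy)]
          rfl
    · rintro ⟨hsurj, -⟩
      obtain ⟨x, y, hxy⟩ := hsurj u
      exact hu (hxy ▸ hsum x y)
  · -- S + S = S
    right
    have hsurj : ∀ c : S, ∃ x y : S, x + y = c := fun c => hfull c
    refine ⟨?_, hsurj, hzd⟩
    rintro ⟨f, hadd, -⟩
    obtain ⟨x, y, hxy⟩ := hsurj (f.symm T8.b)
    have h1 : f (x + y) = T8.b := by rw [hxy, f.apply_symm_apply]
    have h2 : f (x + y) = T8.a := by rw [hadd]; rfl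
    rw [h2] at h1
    exact T8.noConfusion h1
end
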